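/- arXiv:2507.13829 — 5 statements merged into one kernel-verified Lean document; each statement's English description precedes it below -/
import Mathlib

section
/- Let a, b ∈ ℝ and let x: ℝ → ℂ be the linear chirp x(t) = e^{2iπt(a+bt)}. Let σ_b = √(2/(1+4b²)). Then for every τ, ω ∈ ℝ, Spec(x)(τ+iω) = σ_b · exp(−π σ_b² (ω − (a + 2bτ))²). -/
open Real MeasureTheory

/-- The Gaussian-window spectrogram:
`Spec y (τ+iω) = |∫ y(t) 2^{1/4} e^{−π(t−τ)²} e^{−2iπωt} dt|²`. -/
noncomputable def Spec (y : ℝ → ℂ) (z : ℂ) : ℝ :=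
  ‖∫ t : ℝ, y t * (((2 : ℝ) ^ ((1 : ℝ) / 4) : ℝ) : ℂ)
    * Complex.exp (-(π : ℂ) * ((t : ℂ) - (z.re : ℂ)) ^ 2)
    * Complex.exp (-2 * (π : ℂ) * Complex.I * (z.im : ℂ) * (t : ℂ))‖ ^ 2

/-- The spectrogram of the linear chirp `x(t) = e^{2iπt(a+bt)}` is
`σ_b exp(−π σ_b² (ω − (a + 2bτ))²)` with `σ_b = √(2/(1+4b²))`. -/
theorem spec_linear_chirp (a b : ℝ) (σ : ℝ) (hσ : σ = Real.sqrt (2 / (1 + 4 * b ^ 2)))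
    (x : ℝ → ℂ)
    (hx : ∀ t : ℝ, x t = Complex.exp (2 * (π : ℂ) * Complex.I * (t : ℂ)
      * ((a : ℂ) + (b : ℂ) * (t : ℂ))))
    (τ ω : ℝ) :
    Spec x ((τ : ℂ) + (ω : ℂ) * Complex.I) =
      σ * Real.exp (-π * σ ^ 2 * (ω - (a + 2 * b * τ)) ^ 2) := by
  have h4b : (0:ℝ) < 1 + 4*b^2 := by positivity
  set B : ℂ := -(π:ℂ) + 2*π*Complex.I*b with hB
  set C : ℂ := 2*π*τ + 2*π*Complex.I*(a-ω) with hC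
  set D : ℂ := -(π:ℂ)*τ^2 with hD
  have hBre : B.re < 0 := by simp [hB]; positivity
  have hBne : B ≠ 0 := fun h => by simp [h] at hBre
  set r : ℝ := -π*τ^2*(1+4*b^2) + π*(τ^2 - (a-ω)^2 - 4*b*τ*(a-ω)) with hr
  set s : ℝ := π*(2*τ*(a-ω) + 2*b*(τ^2-(a-ω)^2)) with hs
  have hkey : ((1+4*b^2 : ℝ):ℂ) * C^2
      = 4*B*(((1+4*b^2 : ℝ):ℂ)*D - ((r:ℂ)+(s:ℂ)*Complex.I)) := by
    rw [hB, hC, hD, hr, hs]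
    push_cast
    apply Complex.ext <;>
      simp [Complex.mul_re, Complex.mul_im, Complex.add_re, Complex.add_im,
        Complex.sub_re, Complex.sub_im, pow_two] <;> ring
  have hKne : ((1+4*b^2 : ℝ):ℂ) ≠ 0 := Complex.ofReal_ne_zero.mpr h4b.ne'
  have hE : D - C^2/(4*B) = ((r:ℂ)+(s:ℂ)*Complex.I)/((1+4*b^2 : ℝ):ℂ) := by
    have h4B : (4:ℂ)*B ≠ 0 := by simp [hBne]
    rw [eq_div_iff hKne]
    have expand : (D - C^2/(4*B)) * ((1+4*b^2 : ℝ):ℂ)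
        = ((1+4*b^2 : ℝ):ℂ) * D - (((1+4*b^2 : ℝ):ℂ) * C^2)/(4*B) := by ring
    rw [expand, hkey, mul_div_cancel_left₀ _ h4B]
    ring
  have hEre : (D - C^2/(4*B)).re = r/(1+4*b^2) := by
    rw [hE, Complex.div_ofReal_re]
    simp
  -- rewrite the integrand
  have hint : ∀ t : ℝ, x t * (((2 : ℝ) ^ ((1 : ℝ) / 4) : ℝ) : ℂ)
      * Complex.exp (-(π : ℂ) * ((t : ℂ) - (τ : ℂ)) ^ 2)
      * Complex.exp (-2 * (π : ℂ) * Complex.I * (ω : ℂ) * (t : ℂ))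
      = (((2 : ℝ) ^ ((1 : ℝ) / 4) : ℝ) : ℂ) * Complex.exp (B*(t:ℂ)^2 + C*(t:ℂ) + D) := by
    intro t
    rw [hx t]
    rw [show Complex.exp (2 * (π : ℂ) * Complex.I * (t : ℂ) * ((a : ℂ) + (b : ℂ) * (t : ℂ)))
        * (((2 : ℝ) ^ ((1 : ℝ) / 4) : ℝ) : ℂ)
        * Complex.exp (-(π : ℂ) * ((t : ℂ) - (τ : ℂ)) ^ 2)
        * Complex.exp (-2 * (π : ℂ) * Complex.I * (ω : ℂ) * (t : ℂ))
        = (((2 : ℝ) ^ ((1 : ℝ) / 4) : ℝ) : ℂ)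
          * Complex.exp (2 * (π : ℂ) * Complex.I * (t : ℂ) * ((a : ℂ) + (b : ℂ) * (t : ℂ))
            + (-(π : ℂ) * ((t : ℂ) - (τ : ℂ)) ^ 2)
            + (-2 * (π : ℂ) * Complex.I * (ω : ℂ) * (t : ℂ))) from by
      rw [Complex.exp_add, Complex.exp_add]; ring]
    congr 1
    rw [hB, hC, hD]
    ring
  have hzre : (((τ : ℂ) + (ω : ℂ) * Complex.I).re : ℝ) = τ := by simp
  have hzim : (((τ : ℂ) + (ω : ℂ) * Complex.I).im : ℝ) = ω := by simp
  unfold Spec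
  rw [hzre, hzim]
  simp only [hint]
  rw [MeasureTheory.integral_const_mul, integral_cexp_quadratic hBre C D]
  -- now compute the absolute value
  have hπBne : (π:ℂ)/(-B) ≠ 0 := by
    apply div_ne_zero
    · exact_mod_cast Complex.ofReal_ne_zero.mpr Real.pi_ne_zero
    · simpa using hBne
  have habsB : ‖B‖ = π * Real.sqrt (1+4*b^2) := by
    rw [Complex.norm_def, Complex.normSq_apply]
    rw [show B.re * B.re + B.im * B.im = π^2 * (1+4*b^2) by
      rw [hB]; simp [Complex.add_re, Complex.add_im, Complex.mul_re, Complex.mul_im]; ring]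
    rw [Real.sqrt_mul (sq_nonneg π), Real.sqrt_sq Real.pi_pos.le]
  have habsdiv : ‖(π:ℂ)/(-B)‖ = (Real.sqrt (1+4*b^2))⁻¹ := by
    rw [norm_div, norm_neg, habsB, Complex.norm_real, Real.norm_eq_abs,
      abs_of_pos Real.pi_pos]
    field_simp
  rw [norm_mul, norm_mul, Complex.norm_real, Real.norm_eq_abs, Complex.norm_exp,
    Complex.norm_cpow_of_ne_zero hπBne, habsdiv, hEre]
  have hK0 : (0:ℝ) < Real.sqrt (1+4*b^2) := Real.sqrt_pos.mpr h4b
  have him : ((1/2 : ℂ)).im = 0 := by norm_num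
  have hre : ((1/2 : ℂ)).re = 1/2 := by norm_num
  rw [him, hre, mul_zero, Real.exp_zero, div_one]
  rw [abs_of_nonneg (Real.rpow_nonneg (by norm_num) _)]
  -- now a purely real computation
  have hσ2 : σ^2 = 2/(1+4*b^2) := by
    rw [hσ, Real.sq_sqrt (by positivity)]
  have hrval : r = -π * (ω - (a + 2*b*τ))^2 := by rw [hr]; ring
  rw [mul_pow, mul_pow]
  have e1 : (((2:ℝ) ^ ((1:ℝ)/4)) ^ 2 : ℝ) = Real.sqrt 2 := by
    rw [← Real.rpow_natCast ((2:ℝ) ^ ((1:ℝ)/4)) 2, ← Real.rpow_mul (by norm_num)]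
    rw [Real.sqrt_eq_rpow]
    norm_num
  have e2 : (((Real.sqrt (1+4*b^2))⁻¹ ^ ((1:ℝ)/2)) ^ 2 : ℝ) = (Real.sqrt (1+4*b^2))⁻¹ := by
    rw [← Real.rpow_natCast ((Real.sqrt (1+4*b^2))⁻¹ ^ ((1:ℝ)/2)) 2,
      ← Real.rpow_mul (by positivity)]
    norm_num
  have e3 : (Real.exp (r/(1+4*b^2)))^2 = Real.exp (-π * σ^2 * (ω - (a + 2*b*τ))^2) := by
    rw [sq, ← Real.exp_add]
    congr 1
    rw [hσ2, hrval]
    field_simp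
    ring
  rw [e1, e2, e3, hσ, Real.sqrt_div (by norm_num : (0:ℝ) ≤ 2), div_eq_mul_inv]
  ring
end

section
/- Let a₁, a₂, b ∈ ℝ, γ₁, γ₂ > 0, σ_b = √(2/(1+4b²)), and let x: ℝ → ℂ be the pair of parallel linear chirps x(t) = √γ₁ e^{2iπt(a₁+bt)} + √γ₂ e^{2iπt(a₂+bt)}. Then for every z = τ+iω ∈ ℂ, Spec(x)(z) = σ_b (γ₁ e^{−2πr²} + γ₂ e^{−2π(r−a)²} + 2√(γ₁γ₂) e^{−πr² − π(r−a)²} cos(2πas)), where a = (σ_b/√2)(a₂−a₁), r = (σ_b/√2)(ω − 2bτ − a₁), and s = (σ_b/√2)(τ + 2bω − (a₁+a₂)b). -/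
open Real MeasureTheory

set_option maxHeartbeats 2000000 in
/-- The spectrogram of a pair of parallel linear chirps
`x(t) = √γ₁ e^{2iπt(a₁+bt)} + √γ₂ e^{2iπt(a₂+bt)}` in the rotated coordinates
`(r, s)`. -/
theorem spec_pair_of_chirps (a₁ a₂ b γ₁ γ₂ : ℝ) (hγ₁ : 0 < γ₁) (hγ₂ : 0 < γ₂)
    (σ : ℝ) (hσ : σ = Real.sqrt (2 / (1 + 4 * b ^ 2)))
    (x : ℝ → ℂ)
    (hx : ∀ t : ℝ, x t =
      (Real.sqrt γ₁ : ℂ) * Complex.exp (2 * (π : ℂ) * Complex.I * (t : ℂ)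
        * ((a₁ : ℂ) + (b : ℂ) * (t : ℂ)))
      + (Real.sqrt γ₂ : ℂ) * Complex.exp (2 * (π : ℂ) * Complex.I * (t : ℂ)
        * ((a₂ : ℂ) + (b : ℂ) * (t : ℂ))))
    (z : ℂ) (a r s : ℝ)
    (ha : a = σ / Real.sqrt 2 * (a₂ - a₁))
    (hr : r = σ / Real.sqrt 2 * (z.im - 2 * b * z.re - a₁))
    (hs : s = σ / Real.sqrt 2 * (z.re + 2 * b * z.im - (a₁ + a₂) * b)) :
    Spec x z = σ * (γ₁ * Real.exp (-2 * π * r ^ 2) + γ₂ * Real.exp (-2 * π * (r - a) ^ 2)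
      + 2 * Real.sqrt (γ₁ * γ₂) * Real.exp (-π * r ^ 2 - π * (r - a) ^ 2)
        * Real.cos (2 * π * a * s)) := by
  have hd : (0:ℝ) < 1 + 4 * b ^ 2 := by positivity
  have hd' : (1 + 4 * b ^ 2 : ℝ) ≠ 0 := hd.ne'
  have hd2 : (1 + b ^ 2 * 4 : ℝ) ≠ 0 := by nlinarith
  set τ : ℝ := z.re with hτ
  set ω : ℝ := z.im with hω
  set B : ℂ := ↑π * (-1 + 2 * (b:ℂ) * Complex.I) with hB
  have hBre : B.re < 0 := by
    simp [hB, Complex.mul_re]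
    positivity
  set C₁ : ℂ := 2*(π:ℂ)*(τ:ℂ) + 2*(π:ℂ)*((a₁:ℂ)-(ω:ℂ))*Complex.I with hC₁
  set C₂ : ℂ := 2*(π:ℂ)*(τ:ℂ) + 2*(π:ℂ)*((a₂:ℂ)-(ω:ℂ))*Complex.I with hC₂
  set D : ℂ := -(π:ℂ) * (τ:ℂ)^2 with hD
  set c₁ : ℝ := Real.sqrt γ₁ * (2:ℝ)^((1:ℝ)/4) with hc₁
  set c₂ : ℝ := Real.sqrt γ₂ * (2:ℝ)^((1:ℝ)/4) with hc₂
  set R₁ : ℝ := -π*(a₁-ω+2*b*τ)^2/(1+4*b^2) with hR₁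
  set R₂ : ℝ := -π*(a₂-ω+2*b*τ)^2/(1+4*b^2) with hR₂
  set M₁ : ℝ := π*(2*τ*(a₁-ω)+2*b*(τ^2-(a₁-ω)^2))/(1+4*b^2) with hM₁
  set M₂ : ℝ := π*(2*τ*(a₂-ω)+2*b*(τ^2-(a₂-ω)^2))/(1+4*b^2) with hM₂
  -- rewrite the integrand
  have hfun : ∀ t : ℝ, x t * (((2 : ℝ) ^ ((1 : ℝ) / 4) : ℝ) : ℂ)
      * Complex.exp (-(π : ℂ) * ((t : ℂ) - (τ : ℂ)) ^ 2)
      * Complex.exp (-2 * (π : ℂ) * Complex.I * (ω : ℂ) * (t : ℂ))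
      = (c₁:ℂ) * Complex.exp (B*(t:ℂ)^2+C₁*(t:ℂ)+D)
        + (c₂:ℂ) * Complex.exp (B*(t:ℂ)^2+C₂*(t:ℂ)+D) := by
    intro t
    rw [hx t]
    have e1 : B*(t:ℂ)^2+C₁*(t:ℂ)+D
        = (2 * (π : ℂ) * Complex.I * (t : ℂ) * ((a₁ : ℂ) + (b : ℂ) * (t : ℂ)))
          + (-(π : ℂ) * ((t : ℂ) - (τ : ℂ)) ^ 2 + -2 * (π : ℂ) * Complex.I * (ω : ℂ) * (t : ℂ)) := by
      rw [hB, hC₁, hD]; ring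
    have e2 : B*(t:ℂ)^2+C₂*(t:ℂ)+D
        = (2 * (π : ℂ) * Complex.I * (t : ℂ) * ((a₂ : ℂ) + (b : ℂ) * (t : ℂ)))
          + (-(π : ℂ) * ((t : ℂ) - (τ : ℂ)) ^ 2 + -2 * (π : ℂ) * Complex.I * (ω : ℂ) * (t : ℂ)) := by
      rw [hB, hC₂, hD]; ring
    rw [e1, e2, Complex.exp_add, Complex.exp_add, Complex.exp_add, Complex.exp_add,
      hc₁, hc₂]
    push_cast
    ring
  -- compute the integral
  have hint : (∫ t : ℝ, x t * (((2 : ℝ) ^ ((1 : ℝ) / 4) : ℝ) : ℂ)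
      * Complex.exp (-(π : ℂ) * ((t : ℂ) - (τ : ℂ)) ^ 2)
      * Complex.exp (-2 * (π : ℂ) * Complex.I * (ω : ℂ) * (t : ℂ)))
      = ((π:ℂ) / -B) ^ ((1:ℂ)/2) * ((c₁:ℂ) * Complex.exp (D - C₁^2/(4*B))
        + (c₂:ℂ) * Complex.exp (D - C₂^2/(4*B))) := by
    simp_rw [hfun]
    rw [integral_add ((integrable_cexp_quadratic' hBre C₁ D).const_mul _)
      ((integrable_cexp_quadratic' hBre C₂ D).const_mul _),
      integral_const_mul, integral_const_mul,
      integral_cexp_quadratic hBre C₁ D, integral_cexp_quadratic hBre C₂ D]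
    ring_nf
  -- the exponents, explicitly
  have hw : ∀ aj : ℝ, D - (2*(π:ℂ)*(τ:ℂ) + 2*(π:ℂ)*((aj:ℂ)-(ω:ℂ))*Complex.I)^2/(4*B)
      = ((-π*(aj-ω+2*b*τ)^2/(1+4*b^2) : ℝ) : ℂ)
        + ((π*(2*τ*(aj-ω)+2*b*(τ^2-(aj-ω)^2))/(1+4*b^2) : ℝ) : ℂ) * Complex.I := by
    intro aj
    have hB0 : (4 * B) ≠ 0 := by
      rw [hB]; simp [Complex.ext_iff, pi_ne_zero]
    rw [hD, hB, sub_eq_iff_eq_add, ← sub_eq_iff_eq_add', eq_div_iff (hB ▸ hB0)]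
    simp only [Complex.ext_iff, Complex.mul_re, Complex.mul_im, Complex.add_re, Complex.add_im,
      Complex.sub_re, Complex.sub_im, Complex.ofReal_re, Complex.ofReal_im, Complex.I_re,
      Complex.I_im, Complex.neg_re, Complex.neg_im, Complex.one_re, Complex.one_im, pow_two]
    constructor <;> (simp only [Complex.re_ofNat, Complex.im_ofNat]; field_simp; ring)
  have hw1 : D - C₁^2/(4*B) = ((R₁ : ℝ) : ℂ) + ((M₁ : ℝ) : ℂ) * Complex.I := by
    rw [hC₁, hR₁, hM₁]; exact hw a₁
  have hw2 : D - C₂^2/(4*B) = ((R₂ : ℝ) : ℂ) + ((M₂ : ℝ) : ℂ) * Complex.I := by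
    rw [hC₂, hR₂, hM₂]; exact hw a₂
  rw [Spec, hint, hw1, hw2, norm_mul, mul_pow]
  -- |K|^2
  have hK : ‖((π:ℂ) / -B) ^ ((1:ℂ)/2)‖ ^ 2 = 1 / Real.sqrt (1 + 4*b^2) := by
    have hx0 : ((π:ℂ) / -B) ≠ 0 := by
      rw [hB]; simp [Complex.ext_iff, pi_ne_zero, div_eq_zero_iff]
    rw [Complex.norm_cpow_of_ne_zero hx0]
    have habs : ‖(π:ℂ) / -B‖ = 1 / Real.sqrt (1 + 4*b^2) := by
      rw [hB, norm_div, norm_neg, norm_mul, Complex.norm_real, Real.norm_eq_abs, abs_of_pos pi_pos]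
      have h1 : ‖-1 + 2 * (b:ℂ) * Complex.I‖ = Real.sqrt (1 + 4*b^2) := by
        rw [Complex.norm_def, Complex.normSq_apply]
        norm_num
        ring_nf
      rw [h1]
      field_simp
    rw [habs]
    simp
    rw [← Real.rpow_natCast _ 2, ← Real.rpow_mul (by positivity)]
    norm_num
  rw [hK]
  -- |sum|^2 via normSq
  rw [Complex.sq_norm, Complex.normSq_add, Complex.normSq_mul, Complex.normSq_mul,
    Complex.normSq_ofReal, Complex.normSq_ofReal]
  have hnsq : ∀ R M : ℝ, Complex.normSq (Complex.exp ((R:ℂ) + (M:ℂ) * Complex.I))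
      = Real.exp R ^ 2 := by
    intro R M
    rw [← Complex.sq_norm, Complex.norm_exp]
    simp
  rw [hnsq R₁ M₁, hnsq R₂ M₂]
  -- cross term
  have hcross : ((c₁:ℂ) * Complex.exp ((R₁:ℂ) + (M₁:ℂ) * Complex.I)
      * (starRingEnd ℂ) ((c₂:ℂ) * Complex.exp ((R₂:ℂ) + (M₂:ℂ) * Complex.I))).re
      = c₁ * c₂ * (Real.exp (R₁ + R₂) * Real.cos (M₁ - M₂)) := by
    rw [map_mul, Complex.conj_ofReal, ← Complex.exp_conj]
    have hc : (starRingEnd ℂ) ((R₂:ℂ) + (M₂:ℂ) * Complex.I) = (R₂:ℂ) - (M₂:ℂ) * Complex.I := by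
      simp [Complex.ext_iff]
    rw [hc]
    have hp : (c₁:ℂ) * Complex.exp ((R₁:ℂ) + (M₁:ℂ) * Complex.I)
        * ((c₂:ℂ) * Complex.exp ((R₂:ℂ) - (M₂:ℂ) * Complex.I))
        = ((c₁ * c₂ : ℝ) : ℂ) * Complex.exp (((R₁ + R₂ : ℝ) : ℂ) + ((M₁ - M₂ : ℝ):ℂ) * Complex.I) := by
      have harg : ((R₁:ℂ) + (M₁:ℂ) * Complex.I) + ((R₂:ℂ) - (M₂:ℂ) * Complex.I)
          = ((R₁ + R₂ : ℝ) : ℂ) + ((M₁ - M₂ : ℝ):ℂ) * Complex.I := by push_cast; ring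
      rw [show (c₁:ℂ) * Complex.exp ((R₁:ℂ) + (M₁:ℂ) * Complex.I)
        * ((c₂:ℂ) * Complex.exp ((R₂:ℂ) - (M₂:ℂ) * Complex.I))
        = ((c₁ * c₂ : ℝ) : ℂ) * (Complex.exp ((R₁:ℂ) + (M₁:ℂ) * Complex.I)
          * Complex.exp ((R₂:ℂ) - (M₂:ℂ) * Complex.I)) from by push_cast; ring,
        ← Complex.exp_add, harg]
    rw [hp]
    simp [Complex.mul_re, Complex.exp_re, Complex.exp_im]
  rw [hcross]
  -- now pure real algebra
  have hσ2 : σ ^ 2 = 2 / (1 + 4 * b ^ 2) := by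
    rw [hσ]; exact Real.sq_sqrt (by positivity)
  have hh : (σ / Real.sqrt 2) ^ 2 = 1 / (1 + 4 * b ^ 2) := by
    rw [div_pow, hσ2, Real.sq_sqrt (by norm_num : (0:ℝ) ≤ 2)]
    field_simp

  have hr2 : r ^ 2 = (ω - 2*b*τ - a₁)^2 / (1 + 4*b^2) := by
    rw [hr, mul_pow, hh]; ring
  have hra2 : (r - a) ^ 2 = (ω - 2*b*τ - a₂)^2 / (1 + 4*b^2) := by
    rw [hr, ha, show σ / Real.sqrt 2 * (ω - 2*b*τ - a₁) - σ / Real.sqrt 2 * (a₂ - a₁)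
      = σ / Real.sqrt 2 * (ω - 2*b*τ - a₂) from by ring, mul_pow, hh]
    ring
  have hRr1 : R₁ = -(π * r ^ 2) := by
    rw [hR₁, hr2]; ring
  have hRr2 : R₂ = -(π * (r - a) ^ 2) := by
    rw [hR₂, hra2]; ring
  have has : a * s = (a₂ - a₁) * (τ + 2*b*ω - (a₁+a₂)*b) / (1 + 4*b^2) := by
    rw [ha, hs, show σ / Real.sqrt 2 * (a₂ - a₁) * (σ / Real.sqrt 2 * (τ + 2*b*ω - (a₁+a₂)*b))
      = (σ / Real.sqrt 2)^2 * ((a₂ - a₁) * (τ + 2*b*ω - (a₁+a₂)*b)) from by ring, hh]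
    ring
  have hMM : M₁ - M₂ = -(2 * π * a * s) := by
    rw [hM₁, hM₂, show (2:ℝ) * π * a * s = 2 * π * (a * s) from by ring, has]
    ring
  have hc1sq : c₁ ^ 2 = γ₁ * Real.sqrt 2 := by
    rw [hc₁, mul_pow, Real.sq_sqrt hγ₁.le, ← Real.rpow_natCast ((2:ℝ)^((1:ℝ)/4)) 2,
      ← Real.rpow_mul (by norm_num), Real.sqrt_eq_rpow]
    norm_num
  have hc2sq : c₂ ^ 2 = γ₂ * Real.sqrt 2 := by
    rw [hc₂, mul_pow, Real.sq_sqrt hγ₂.le, ← Real.rpow_natCast ((2:ℝ)^((1:ℝ)/4)) 2,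
      ← Real.rpow_mul (by norm_num), Real.sqrt_eq_rpow]
    norm_num
  have hc12 : c₁ * c₂ = Real.sqrt (γ₁ * γ₂) * Real.sqrt 2 := by
    have h1 : (0:ℝ) ≤ c₁ := by rw [hc₁]; positivity
    have h2 : (0:ℝ) ≤ c₂ := by rw [hc₂]; positivity
    rw [← Real.sqrt_sq (mul_nonneg h1 h2), mul_pow, hc1sq, hc2sq,
      show γ₁ * Real.sqrt 2 * (γ₂ * Real.sqrt 2) = γ₁ * γ₂ * (Real.sqrt 2 * Real.sqrt 2) from by
        ring,
      Real.mul_self_sqrt (by norm_num : (0:ℝ) ≤ 2),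
      Real.sqrt_mul (by positivity : (0:ℝ) ≤ γ₁ * γ₂)]
  have hexp1 : Real.exp R₁ ^ 2 = Real.exp (-2 * π * r ^ 2) := by
    rw [sq, ← Real.exp_add, hRr1]; ring_nf
  have hexp2 : Real.exp R₂ ^ 2 = Real.exp (-2 * π * (r - a) ^ 2) := by
    rw [sq, ← Real.exp_add, hRr2]; ring_nf
  have hexp3 : Real.exp (R₁ + R₂) = Real.exp (-π * r ^ 2 - π * (r - a) ^ 2) := by
    rw [hRr1, hRr2]; ring_nf
  have hcos : Real.cos (M₁ - M₂) = Real.cos (2 * π * a * s) := by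
    rw [hMM, Real.cos_neg]
  rw [hexp1, hexp2, hexp3, hcos, show c₁ * c₁ = c₁ ^ 2 from (sq c₁).symm,
    show c₂ * c₂ = c₂ ^ 2 from (sq c₂).symm, hc1sq, hc2sq, hc12]
  have hσ' : σ = Real.sqrt 2 / Real.sqrt (1 + 4 * b ^ 2) := by
    rw [hσ, Real.sqrt_div (by norm_num : (0:ℝ) ≤ 2)]
  rw [hσ']
  have hsd : Real.sqrt (1 + 4 * b ^ 2) ≠ 0 := by positivity
  field_simp
end

section
/- Let a₁, a₂, b ∈ ℝ with a₁ ≠ a₂, γ₁, γ₂ > 0, σ_b = √(2/(1+4b²)), and let x(t) = √γ₁ e^{2iπt(a₁+bt)} + √γ₂ e^{2iπt(a₂+bt)}. For z = τ+iω ∈ ℂ set a = (σ_b/√2)(a₂−a₁), r = (σ_b/√2)(ω − 2bτ − a₁), and s = (σ_b/√2)(τ + 2bω − (a₁+a₂)b). Then Spec(x)(z) = 0 if and only if r = a/2 − log(γ₂/γ₁)/(4aπ) and as − 1/2 ∈ ℤ. -/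
open Real MeasureTheory

private lemma key_identity (a₁ a₂ b τ ω : ℝ) :
    ((2*(π:ℂ)*((τ:ℂ) + ((a₁:ℝ):ℂ)*Complex.I - (ω:ℂ)*Complex.I))^2
      - (2*(π:ℂ)*((τ:ℂ) + ((a₂:ℝ):ℂ)*Complex.I - (ω:ℂ)*Complex.I))^2)
      * (((1+4*b^2 : ℝ)) : ℂ)
    = (((π*(a₂-a₁)*(2*ω - (a₁+a₂) - 4*b*τ) : ℝ) : ℂ)
        + ((π*(a₂-a₁)*(2*τ + 4*b*ω - 2*b*(a₁+a₂)) : ℝ) : ℂ) * Complex.I)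
      * (4 * (-(π:ℂ) + 2*π*b*Complex.I)) := by
  simp [Complex.ext_iff, pow_two]
  constructor <;> ring

/-- The spectrogram of a pair of distinct parallel linear chirps
`x(t) = √γ₁ e^{2iπt(a₁+bt)} + √γ₂ e^{2iπt(a₂+bt)}` vanishes at `z` exactly when, in the
rotated coordinates, `r = a/2 − log(γ₂/γ₁)/(4aπ)` and `as − 1/2 ∈ ℤ`. -/
theorem spec_pair_of_chirps_eq_zero_iff (a₁ a₂ b γ₁ γ₂ : ℝ) (hne : a₁ ≠ a₂)
    (hγ₁ : 0 < γ₁) (hγ₂ : 0 < γ₂)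
    (σ : ℝ) (hσ : σ = Real.sqrt (2 / (1 + 4 * b ^ 2)))
    (x : ℝ → ℂ)
    (hx : ∀ t : ℝ, x t =
      (Real.sqrt γ₁ : ℂ) * Complex.exp (2 * (π : ℂ) * Complex.I * (t : ℂ)
        * ((a₁ : ℂ) + (b : ℂ) * (t : ℂ)))
      + (Real.sqrt γ₂ : ℂ) * Complex.exp (2 * (π : ℂ) * Complex.I * (t : ℂ)
        * ((a₂ : ℂ) + (b : ℂ) * (t : ℂ))))
    (z : ℂ) (a r s : ℝ)
    (ha : a = σ / Real.sqrt 2 * (a₂ - a₁))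
    (hr : r = σ / Real.sqrt 2 * (z.im - 2 * b * z.re - a₁))
    (hs : s = σ / Real.sqrt 2 * (z.re + 2 * b * z.im - (a₁ + a₂) * b)) :
    Spec x z = 0 ↔
      (r = a / 2 - Real.log (γ₂ / γ₁) / (4 * a * π) ∧ ∃ m : ℤ, a * s - 1 / 2 = (m : ℝ)) := by
  -- notation
  set τ := z.re with hτ
  set ω := z.im with hω
  set B : ℂ := -(π:ℂ) + 2*π*b*Complex.I with hB
  set C₁ : ℂ := 2*(π:ℂ)*((τ:ℂ) + ((a₁:ℝ):ℂ)*Complex.I - (ω:ℂ)*Complex.I) with hC₁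
  set C₂ : ℂ := 2*(π:ℂ)*((τ:ℂ) + ((a₂:ℝ):ℂ)*Complex.I - (ω:ℂ)*Complex.I) with hC₂
  set D : ℂ := -(π:ℂ)*(τ:ℂ)^2 with hD
  have hBre : B.re < 0 := by simp [hB, Real.pi_pos]
  have hBne : B ≠ 0 := by intro h; rw [h] at hBre; simp at hBre
  set c : ℂ := (((2 : ℝ) ^ ((1 : ℝ) / 4) : ℝ) : ℂ) with hc
  have hcne : c ≠ 0 := by
    rw [hc]; exact_mod_cast (Real.rpow_pos_of_pos two_pos _).ne'
  set g₁ : ℂ := (Real.sqrt γ₁ : ℂ) with hg₁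
  set g₂ : ℂ := (Real.sqrt γ₂ : ℂ) with hg₂
  have hg₁ne : g₁ ≠ 0 := by
    rw [hg₁, Complex.ofReal_ne_zero]; exact (Real.sqrt_pos.mpr hγ₁).ne'
  have hg₂ne : g₂ ≠ 0 := by
    rw [hg₂, Complex.ofReal_ne_zero]; exact (Real.sqrt_pos.mpr hγ₂).ne'
  set P : ℂ := ((π:ℂ) / -B) ^ ((1:ℂ)/2) with hP
  have hPne : P ≠ 0 := by
    rw [hP]
    intro h
    rw [Complex.cpow_eq_zero_iff] at h
    exact (div_ne_zero (by exact_mod_cast Real.pi_ne_zero) (neg_ne_zero.mpr hBne)) h.1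
  -- step 1 : integrand
  have hint : ∀ t : ℝ, x t * c
      * Complex.exp (-(π : ℂ) * ((t : ℂ) - (τ : ℂ)) ^ 2)
      * Complex.exp (-2 * (π : ℂ) * Complex.I * (ω : ℂ) * (t : ℂ))
      = g₁ * (c * Complex.exp (B*(t:ℂ)^2 + C₁*(t:ℂ) + D))
        + g₂ * (c * Complex.exp (B*(t:ℂ)^2 + C₂*(t:ℂ) + D)) := by
    intro t
    have e1 : ∀ aa : ℝ, Complex.exp (2 * (π : ℂ) * Complex.I * (t : ℂ)
          * ((aa : ℂ) + (b : ℂ) * (t : ℂ)))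
        * Complex.exp (-(π : ℂ) * ((t : ℂ) - (τ : ℂ)) ^ 2)
        * Complex.exp (-2 * (π : ℂ) * Complex.I * (ω : ℂ) * (t : ℂ))
        = Complex.exp (B*(t:ℂ)^2 + (2*(π:ℂ)*((τ:ℂ) + ((aa:ℝ):ℂ)*Complex.I - (ω:ℂ)*Complex.I))*(t:ℂ) + D) := by
      intro aa
      rw [← Complex.exp_add, ← Complex.exp_add]
      congr 1
      rw [hB, hD]
      ring
    calc x t * c * Complex.exp (-(π : ℂ) * ((t : ℂ) - (τ : ℂ)) ^ 2)
          * Complex.exp (-2 * (π : ℂ) * Complex.I * (ω : ℂ) * (t : ℂ))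
        = g₁ * (c * (Complex.exp (2 * (π : ℂ) * Complex.I * (t : ℂ) * ((a₁ : ℂ) + (b : ℂ) * (t : ℂ)))
            * Complex.exp (-(π : ℂ) * ((t : ℂ) - (τ : ℂ)) ^ 2)
            * Complex.exp (-2 * (π : ℂ) * Complex.I * (ω : ℂ) * (t : ℂ))))
          + g₂ * (c * (Complex.exp (2 * (π : ℂ) * Complex.I * (t : ℂ) * ((a₂ : ℂ) + (b : ℂ) * (t : ℂ)))
            * Complex.exp (-(π : ℂ) * ((t : ℂ) - (τ : ℂ)) ^ 2)
            * Complex.exp (-2 * (π : ℂ) * Complex.I * (ω : ℂ) * (t : ℂ)))) := by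
          rw [hx]; ring
      _ = _ := by rw [e1 a₁, e1 a₂, ← hC₁, ← hC₂]
  -- step 2 : the integral
  set E₁ : ℂ := D - C₁^2/(4*B) with hE₁
  set E₂ : ℂ := D - C₂^2/(4*B) with hE₂
  have hval : (∫ t : ℝ, x t * c
      * Complex.exp (-(π : ℂ) * ((t : ℂ) - (τ : ℂ)) ^ 2)
      * Complex.exp (-2 * (π : ℂ) * Complex.I * (ω : ℂ) * (t : ℂ)))
      = g₁ * (c * (P * Complex.exp E₁)) + g₂ * (c * (P * Complex.exp E₂)) := by
    have i1 : Integrable (fun t : ℝ ↦ Complex.exp (B*(t:ℂ)^2 + C₁*(t:ℂ) + D)) :=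
      integrable_cexp_quadratic' hBre C₁ D
    have i2 : Integrable (fun t : ℝ ↦ Complex.exp (B*(t:ℂ)^2 + C₂*(t:ℂ) + D)) :=
      integrable_cexp_quadratic' hBre C₂ D
    rw [integral_congr_ae (Filter.Eventually.of_forall hint)]
    rw [integral_add ((i1.const_mul c).const_mul g₁) ((i2.const_mul c).const_mul g₂),
      integral_const_mul, integral_const_mul, integral_const_mul, integral_const_mul,
      integral_cexp_quadratic hBre C₁ D, integral_cexp_quadratic hBre C₂ D,
      ← hE₁, ← hE₂]
  -- step 3: reduce Spec = 0 to a sum of exponentials vanishing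
  have hzero : Spec x z = 0 ↔ g₁ * Complex.exp E₁ + g₂ * Complex.exp E₂ = 0 := by
    rw [Spec, ← hτ, ← hω, ← hc, hval, pow_eq_zero_iff two_ne_zero, norm_eq_zero,
      show g₁ * (c * (P * Complex.exp E₁)) + g₂ * (c * (P * Complex.exp E₂))
        = (c*P) * (g₁ * Complex.exp E₁ + g₂ * Complex.exp E₂) from by ring,
      mul_eq_zero, mul_eq_zero]
    simp [hcne, hPne]
  -- step 4: compute E₂ - E₁
  have hbpos : (0:ℝ) < 1 + 4*b^2 := by positivity
  set u : ℝ := π*(a₂-a₁)*(2*ω - (a₁+a₂) - 4*b*τ)/(1+4*b^2) with hu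
  set v : ℝ := π*(a₂-a₁)*(2*τ + 4*b*ω - 2*b*(a₁+a₂))/(1+4*b^2) with hv
  have hE : E₂ - E₁ = (u:ℂ) + (v:ℂ)*Complex.I := by
    have hden : (((1+4*b^2 : ℝ)) : ℂ) ≠ 0 := by
      rw [Complex.ofReal_ne_zero]; exact hbpos.ne'
    have h4B : (4*B) ≠ 0 := mul_ne_zero (by norm_num) hBne
    have h1 : E₂ - E₁ = (C₁^2 - C₂^2)/(4*B) := by rw [hE₁, hE₂]; ring
    have key := key_identity a₁ a₂ b τ ω
    rw [← hC₁, ← hC₂] at key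
    rw [h1, hu, hv]
    push_cast at key ⊢
    have hden' : ((1:ℂ)+4*(b:ℂ)^2) ≠ 0 := by
      have h0 : (((1+4*b^2:ℝ)):ℂ) ≠ 0 := Complex.ofReal_ne_zero.mpr hbpos.ne'
      push_cast at h0; exact h0
    field_simp
    linear_combination key
  -- step 5: rephrase the vanishing condition
  set L : ℝ := Real.log (Real.sqrt γ₁ / Real.sqrt γ₂) with hL
  have hsum : (g₁ * Complex.exp E₁ + g₂ * Complex.exp E₂ = 0) ↔
      Complex.exp (E₂ - E₁) = -(g₁/g₂) := by
    have he₁ : Complex.exp E₁ ≠ 0 := Complex.exp_ne_zero _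
    have hdiv : Complex.exp (E₂ - E₁) = Complex.exp E₂ / Complex.exp E₁ := Complex.exp_sub _ _
    rw [hdiv, ← neg_div, div_eq_div_iff he₁ hg₂ne]
    constructor
    · intro h
      linear_combination h
    · intro h
      linear_combination h
  have hrhs : -(g₁/g₂) = Complex.exp ((L:ℂ) + (π:ℂ)*Complex.I) := by
    rw [Complex.exp_add, Complex.exp_pi_mul_I, hL, ← Complex.ofReal_exp,
      Real.exp_log (div_pos (Real.sqrt_pos.mpr hγ₁) (Real.sqrt_pos.mpr hγ₂))]
    push_cast
    rw [hg₁, hg₂]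
    ring
  have hcond : (g₁ * Complex.exp E₁ + g₂ * Complex.exp E₂ = 0) ↔
      ∃ n : ℤ, u = L ∧ v = π + n*(2*π) := by
    rw [hsum, hrhs, Complex.exp_eq_exp_iff_exists_int]
    apply exists_congr
    intro n
    rw [hE, Complex.ext_iff]
    simp
  -- step 6: real algebra
  rw [hzero, hcond]
  obtain ⟨k, hk⟩ : ∃ k : ℝ, k = σ / Real.sqrt 2 := ⟨_, rfl⟩
  rw [← hk] at ha hr hs
  have hk2 : k^2 * (1+4*b^2) = 1 := by
    rw [hk, hσ, div_pow, Real.sq_sqrt (by positivity : (0:ℝ) ≤ 2/(1+4*b^2)),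
      Real.sq_sqrt (by norm_num : (0:ℝ) ≤ 2)]
    field_simp
  have hkne : k ≠ 0 := by
    intro h; rw [h] at hk2; norm_num at hk2
  have hane : a ≠ 0 := by
    rw [ha]; exact mul_ne_zero hkne (sub_ne_zero.mpr (Ne.symm hne))
  have hu' : u = 2*π*a*r - π*a^2 := by
    rw [hu, ha, hr]
    rw [div_eq_iff hbpos.ne']
    linear_combination (-(π*(a₂-a₁)*(2*ω - (a₁+a₂) - 4*b*τ))) * hk2
  have hv' : v = 2*π*a*s := by
    rw [hv, ha, hs]
    rw [div_eq_iff hbpos.ne']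
    linear_combination (-(π*(a₂-a₁)*(2*τ + 4*b*ω - 2*b*(a₁+a₂)))) * hk2
  have hL' : L = (Real.log γ₁ - Real.log γ₂)/2 := by
    rw [hL, Real.log_div (Real.sqrt_pos.mpr hγ₁).ne' (Real.sqrt_pos.mpr hγ₂).ne',
      Real.log_sqrt hγ₁.le, Real.log_sqrt hγ₂.le]
    ring
  have hlog : Real.log (γ₂/γ₁) = Real.log γ₂ - Real.log γ₁ := Real.log_div hγ₂.ne' hγ₁.ne'
  have htp : (2*π) ≠ 0 := by positivity
  constructor
  · rintro ⟨n, h1, h2⟩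
    rw [hu', hL'] at h1
    rw [hv'] at h2
    constructor
    · rw [hlog]
      field_simp
      linarith [h1]
    · refine ⟨n, ?_⟩
      have h3 : (2*π)*(a*s - 1/2) = (2*π)*(n:ℝ) := by linear_combination h2
      exact mul_left_cancel₀ htp h3
  · rintro ⟨h1, m, h2⟩
    rw [hlog] at h1
    refine ⟨m, ?_, ?_⟩
    · rw [hu', hL']
      field_simp at h1
      linarith [h1]
    · rw [hv']
      linear_combination (2*π)*h2
end

section
/- Let a₁, a₂, b ∈ ℝ with a₁ < a₂, γ > 0, σ_b = √(2/(1+4b²)), a = (σ_b/√2)(a₂−a₁), and let x(t) = √γ e^{2iπt(a₁+bt)} + √γ e^{2iπt(a₂+bt)}. For N ∈ ℤ, let C_N ⊂ ℂ be the set of z = τ+iω such that (r,s) ∈ [0,a] × [N/a, (N+1)/a], where r = (σ_b/√2)(ω − 2bτ − a₁) and s = (σ_b/√2)(τ + 2bω − (a₁+a₂)b). Then Spec(x) has exactly one zero in C_N, namely the point with coordinates (r,s) = (a/2, (N + 1/2)/a). -/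
open Real MeasureTheory

lemma exp_eq_neg_one_iff (w : ℂ) :
    Complex.exp w = -1 ↔ ∃ n : ℤ, w = (2 * (n : ℂ) + 1) * π * Complex.I := by
  rw [← Complex.exp_pi_mul_I, Complex.exp_eq_exp_iff_exists_int]
  constructor
  · rintro ⟨n, h⟩; exact ⟨n, by rw [h]; push_cast; ring⟩
  · rintro ⟨n, h⟩; exact ⟨n, by rw [h]; push_cast; ring⟩

lemma re_im_eq_iff (p q : ℝ) (n : ℤ) :
    ((p : ℂ) + (q : ℂ) * Complex.I = (2 * (n : ℂ) + 1) * π * Complex.I)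
      ↔ (p = 0 ∧ q = (2 * (n : ℝ) + 1) * π) := by
  have h1 : ((2 * (n : ℂ) + 1) * π * Complex.I)
      = ((0 : ℝ) : ℂ) + (((2 * (n : ℝ) + 1) * π : ℝ) : ℂ) * Complex.I := by
    push_cast; ring
  rw [h1]
  simp [Complex.ext_iff]

/-- The spectrogram of a pair of equal-amplitude parallel chirps has exactly one zero in
the rectangle `C_N = {(r,s) ∈ [0,a] × [N/a,(N+1)/a]}`, namely the point with rotated
coordinates `(r,s) = (a/2, (N+1/2)/a)`. -/
theorem unique_zero_in_rectangle (a₁ a₂ b γ : ℝ) (hlt : a₁ < a₂) (hγ : 0 < γ)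
    (σ a : ℝ) (hσ : σ = Real.sqrt (2 / (1 + 4 * b ^ 2)))
    (ha : a = σ / Real.sqrt 2 * (a₂ - a₁))
    (x : ℝ → ℂ)
    (hx : ∀ t : ℝ, x t =
      (Real.sqrt γ : ℂ) * Complex.exp (2 * (π : ℂ) * Complex.I * (t : ℂ)
        * ((a₁ : ℂ) + (b : ℂ) * (t : ℂ)))
      + (Real.sqrt γ : ℂ) * Complex.exp (2 * (π : ℂ) * Complex.I * (t : ℂ)
        * ((a₂ : ℂ) + (b : ℂ) * (t : ℂ))))
    (r s : ℂ → ℝ)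
    (hr : ∀ z : ℂ, r z = σ / Real.sqrt 2 * (z.im - 2 * b * z.re - a₁))
    (hs : ∀ z : ℂ, s z = σ / Real.sqrt 2 * (z.re + 2 * b * z.im - (a₁ + a₂) * b))
    (N : ℤ)
    (C : Set ℂ)
    (hC : C = {z : ℂ | r z ∈ Set.Icc 0 a ∧ s z ∈ Set.Icc ((N : ℝ) / a) (((N : ℝ) + 1) / a)}) :
    (∃! z : ℂ, z ∈ C ∧ Spec x z = 0) ∧
    ∀ z ∈ C, (Spec x z = 0 ↔ (r z = a / 2 ∧ s z = ((N : ℝ) + 1 / 2) / a)) := by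
  have hπ := Real.pi_pos
  have hσpos : 0 < σ := by
    rw [hσ]; exact Real.sqrt_pos.mpr (by positivity)
  set k : ℝ := σ / Real.sqrt 2 with hk_def
  have hkpos : 0 < k := div_pos hσpos (Real.sqrt_pos.mpr two_pos)
  have hk2 : k ^ 2 * (1 + 4 * b ^ 2) = 1 := by
    rw [hk_def, hσ, div_pow, Real.sq_sqrt (by positivity : (0:ℝ) ≤ 2/(1+4*b^2)),
      Real.sq_sqrt (by norm_num : (0:ℝ) ≤ 2)]
    field_simp
  have hk2c : (k : ℂ) ^ 2 * (1 + 4 * (b : ℂ) ^ 2) = 1 := by exact_mod_cast hk2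
  have hapos : 0 < a := by rw [ha]; exact mul_pos hkpos (by linarith)
  -- the main characterization of zeros
  have hiff : ∀ z : ℂ, Spec x z = 0 ↔
      ∃ n : ℤ, (-2*π*a*(r z - a/2) = 0 ∧ -2*π*a*(s z) = (2*(n:ℝ)+1)*π) := by
    intro z
    unfold Spec
    set c : ℂ := (((2 : ℝ) ^ ((1 : ℝ) / 4) : ℝ) : ℂ) with hc
    set B : ℂ := -(π:ℂ) + 2*π*Complex.I*b with hB
    set D : ℂ := -(π:ℂ)*(z.re:ℂ)^2 with hD
    have hBre : B.re < 0 := by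
      have : B.re = -π := by simp [hB]
      rw [this]; linarith
    have hB0 : B ≠ 0 := fun h => by rw [h] at hBre; simp at hBre
    set C₁ : ℂ := 2*π*(z.re:ℂ) + 2*π*Complex.I*((a₁:ℂ) - z.im) with hC1
    set C₂ : ℂ := 2*π*(z.re:ℂ) + 2*π*Complex.I*((a₂:ℂ) - z.im) with hC2
    have h1 : ∀ (aj : ℝ) (t : ℝ),
        Complex.exp (2 * (π : ℂ) * Complex.I * (t : ℂ) * ((aj : ℂ) + (b : ℂ) * (t : ℂ)))
          * Complex.exp (-(π : ℂ) * ((t : ℂ) - (z.re : ℂ)) ^ 2)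
          * Complex.exp (-2 * (π : ℂ) * Complex.I * (z.im : ℂ) * (t : ℂ))
        = Complex.exp (B * (t:ℂ)^2 + (2*π*(z.re:ℂ) + 2*π*Complex.I*((aj:ℂ) - z.im)) * (t:ℂ) + D) := by
      intro aj t
      rw [← Complex.exp_add, ← Complex.exp_add]
      congr 1
      rw [hB, hD]; ring
    have hkey : ∀ t : ℝ, x t * c
        * Complex.exp (-(π : ℂ) * ((t : ℂ) - (z.re : ℂ)) ^ 2)
        * Complex.exp (-2 * (π : ℂ) * Complex.I * (z.im : ℂ) * (t : ℂ))
        = ((Real.sqrt γ : ℂ) * c) * (Complex.exp (B * (t:ℂ)^2 + C₁ * (t:ℂ) + D)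
            + Complex.exp (B * (t:ℂ)^2 + C₂ * (t:ℂ) + D)) := by
      intro t
      rw [hx t, ← h1 a₁ t, ← h1 a₂ t]
      ring
    have hint : (∫ t : ℝ, x t * c
        * Complex.exp (-(π : ℂ) * ((t : ℂ) - (z.re : ℂ)) ^ 2)
        * Complex.exp (-2 * (π : ℂ) * Complex.I * (z.im : ℂ) * (t : ℂ)))
        = ((Real.sqrt γ : ℂ) * c) * (((π:ℂ) / -B) ^ ((1:ℂ)/2)
            * (Complex.exp (D - C₁^2/(4*B)) + Complex.exp (D - C₂^2/(4*B)))) := by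
      simp_rw [hkey]
      rw [MeasureTheory.integral_const_mul _ _,
        MeasureTheory.integral_add (integrable_cexp_quadratic' hBre C₁ D)
          (integrable_cexp_quadratic' hBre C₂ D),
        integral_cexp_quadratic hBre C₁ D, integral_cexp_quadratic hBre C₂ D]
      ring
    rw [hint]
    have hγ0 : (Real.sqrt γ : ℂ) ≠ 0 := by
      simp only [ne_eq, Complex.ofReal_eq_zero]
      exact ne_of_gt (Real.sqrt_pos.mpr hγ)
    have hc0 : c ≠ 0 := by
      simp only [hc, ne_eq, Complex.ofReal_eq_zero]
      positivity
    have hV0 : ((π:ℂ) / -B) ^ ((1:ℂ)/2) ≠ 0 := by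
      simp only [ne_eq, Complex.cpow_eq_zero_iff, not_and_or]
      left
      exact div_ne_zero (by exact_mod_cast Real.pi_ne_zero) (neg_ne_zero.mpr hB0)
    rw [pow_eq_zero_iff two_ne_zero, norm_eq_zero, mul_eq_zero, mul_eq_zero, mul_eq_zero]
    simp only [hγ0, hc0, hV0, false_or]
    -- now: exp E₁ + exp E₂ = 0 ↔ ∃ n, ...
    have hsum : (Complex.exp (D - C₁^2/(4*B)) + Complex.exp (D - C₂^2/(4*B)) = 0)
        ↔ Complex.exp ((D - C₁^2/(4*B)) - (D - C₂^2/(4*B))) = -1 := by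
      have hne := Complex.exp_ne_zero (D - C₂^2/(4*B))
      constructor
      · intro h0
        rw [Complex.exp_sub, div_eq_iff hne]
        linear_combination h0
      · intro h0
        rw [Complex.exp_sub, div_eq_iff hne] at h0
        linear_combination h0
    rw [hsum]
    have hE : (D - C₁^2/(4*B)) - (D - C₂^2/(4*B))
        = ((-2*π*a*(r z - a/2) : ℝ) : ℂ) + ((-2*π*a*(s z) : ℝ) : ℂ) * Complex.I := by
      have hdiff : (D - C₁^2/(4*B)) - (D - C₂^2/(4*B)) = (C₂^2 - C₁^2)/(4*B) := by
        field_simp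
        ring
      rw [hdiff, div_eq_iff (by simp [hB0] : (4:ℂ)*B ≠ 0)]
      rw [hr z, hs z, ha, hB, hC1, hC2]
      push_cast
      linear_combination
        (4*(π:ℂ)^2*((a₂:ℂ)-(a₁:ℂ))*((a₁:ℂ)+(a₂:ℂ)-2*(z.im:ℂ))
          + 16*(π:ℂ)^2*((k:ℂ)*((a₂:ℂ)-(a₁:ℂ)))*(b:ℂ)
            *((k:ℂ)*((z.re:ℂ)+2*(b:ℂ)*(z.im:ℂ)-((a₁:ℂ)+(a₂:ℂ))*(b:ℂ)))) * Complex.I_sq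
        + (-(4*(π:ℂ)^2*((a₂:ℂ)-(a₁:ℂ))*(2*(z.im:ℂ)-(a₁:ℂ)-(a₂:ℂ))
            + 8*(π:ℂ)^2*((a₂:ℂ)-(a₁:ℂ))*(z.re:ℂ)*Complex.I)) * hk2c
    rw [hE, exp_eq_neg_one_iff]
    exact exists_congr fun n => re_im_eq_iff _ _ n
  -- convert to the rectangle form
  have hiff2 : ∀ z ∈ C, (Spec x z = 0 ↔ (r z = a / 2 ∧ s z = ((N : ℝ) + 1 / 2) / a)) := by
    intro z hz
    rw [hC] at hz
    obtain ⟨_, hs1, hs2⟩ : (r z ∈ Set.Icc 0 a) ∧ (N:ℝ)/a ≤ s z ∧ s z ≤ ((N:ℝ)+1)/a := by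
      exact ⟨hz.1, hz.2.1, hz.2.2⟩
    rw [hiff z]
    constructor
    · rintro ⟨n, h1, h2⟩
      have hco : (-2*π*a : ℝ) ≠ 0 := by
        have : 0 < 2*π*a := by positivity
        linarith
      have hrz : r z = a/2 := by
        rcases mul_eq_zero.mp h1 with h | h
        · exact absurd h hco
        · linarith
      have hasz : a * s z = -(n:ℝ) - 1/2 := by
        have hπ0 : (π:ℝ) ≠ 0 := ne_of_gt hπ
        have h2' : (π:ℝ) * (-(2*(a*s z))) = π * (2*(n:ℝ)+1) := by linear_combination h2
        have := mul_left_cancel₀ hπ0 h2'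
        linarith
      have hb1 : (N:ℝ) ≤ a * s z := by
        calc (N:ℝ) = a * ((N:ℝ)/a) := by field_simp
        _ ≤ a * s z := mul_le_mul_of_nonneg_left hs1 (le_of_lt hapos)
      have hb2 : a * s z ≤ (N:ℝ) + 1 := by
        calc a * s z ≤ a * (((N:ℝ)+1)/a) := mul_le_mul_of_nonneg_left hs2 (le_of_lt hapos)
        _ = (N:ℝ) + 1 := by field_simp
      have hn : n = -N - 1 := by
        have e1 : (n:ℝ) < -(N:ℝ) := by linarith
        have e2 : -(N:ℝ) - 2 < (n:ℝ) := by linarith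
        have e1' : n < -N := by exact_mod_cast e1
        have e2' : -N - 2 < n := by exact_mod_cast e2
        omega
      refine ⟨hrz, ?_⟩
      rw [eq_div_iff (ne_of_gt hapos)]
      rw [hn] at hasz
      push_cast at hasz
      linarith
    · rintro ⟨h1, h2⟩
      refine ⟨-N - 1, by rw [h1]; ring, ?_⟩
      rw [h2]
      push_cast
      field_simp
      ring
  refine ⟨?_, hiff2⟩
  -- construct the unique zero
  set u : ℝ := 1 + 4*b^2 with hu_def
  have hupos : 0 < u := by positivity
  set R : ℝ := a/(2*k) + a₁ with hR
  set S : ℝ := ((N:ℝ)+1/2)/a/k + (a₁+a₂)*b with hS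
  set τ₀ : ℝ := (S - 2*b*R)/u with hτ₀
  set ω₀ : ℝ := (R + 2*b*S)/u with hω₀
  set z₀ : ℂ := ⟨τ₀, ω₀⟩ with hz₀
  have hz₀re : z₀.re = τ₀ := rfl
  have hz₀im : z₀.im = ω₀ := rfl
  have hA : ω₀ - 2*b*τ₀ = R := by
    rw [hτ₀, hω₀]
    field_simp
    ring
  have hB' : τ₀ + 2*b*ω₀ = S := by
    rw [hτ₀, hω₀]
    field_simp
    ring
  have hz₀r : r z₀ = a/2 := by
    rw [hr z₀, hz₀re, hz₀im]
    have : ω₀ - 2*b*τ₀ - a₁ = a/(2*k) := by rw [hA, hR]; ring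
    rw [show ω₀ - 2 * b * τ₀ - a₁ = a/(2*k) from this]
    field_simp
  have hz₀s : s z₀ = ((N:ℝ)+1/2)/a := by
    rw [hs z₀, hz₀re, hz₀im]
    have : τ₀ + 2*b*ω₀ - (a₁+a₂)*b = ((N:ℝ)+1/2)/a/k := by rw [hB', hS]; ring
    rw [show τ₀ + 2 * b * ω₀ - (a₁+a₂)*b = ((N:ℝ)+1/2)/a/k from this]
    field_simp
  have hz₀C : z₀ ∈ C := by
    rw [hC]
    refine ⟨⟨?_, ?_⟩, ⟨?_, ?_⟩⟩
    · rw [hz₀r]; linarith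
    · rw [hz₀r]; linarith
    · rw [hz₀s]; exact (div_le_div_iff_of_pos_right hapos).mpr (by linarith)
    · rw [hz₀s]; exact (div_le_div_iff_of_pos_right hapos).mpr (by linarith)
  refine ⟨z₀, ⟨hz₀C, (hiff2 z₀ hz₀C).mpr ⟨hz₀r, hz₀s⟩⟩, ?_⟩
  rintro z' ⟨hz'C, hz'0⟩
  obtain ⟨h1, h2⟩ := (hiff2 z' hz'C).mp hz'0
  have hk0 : k ≠ 0 := ne_of_gt hkpos
  have e1 : z'.im - 2*b*z'.re - a₁ = ω₀ - 2*b*τ₀ - a₁ := by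
    apply mul_left_cancel₀ hk0
    rw [← hr z', ← hz₀re, ← hz₀im, ← hr z₀, h1, hz₀r]
  have e2 : z'.re + 2*b*z'.im - (a₁+a₂)*b = τ₀ + 2*b*ω₀ - (a₁+a₂)*b := by
    apply mul_left_cancel₀ hk0
    rw [← hs z', ← hz₀re, ← hz₀im, ← hs z₀, h2, hz₀s]
  have hu0 : u ≠ 0 := ne_of_gt hupos
  have hre : z'.re = τ₀ := by
    have : u * z'.re = u * τ₀ := by rw [hu_def]; linear_combination e2 - 2*b*e1
    exact mul_left_cancel₀ hu0 this
  have him : z'.im = ω₀ := by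
    have : u * z'.im = u * ω₀ := by rw [hu_def]; linear_combination 2*b*e2 + e1
    exact mul_left_cancel₀ hu0 this
  exact Complex.ext hre him
end

section
/- Let a₁, a₂, b ∈ ℝ with a₁ < a₂, γ > 0, σ_b = √(2/(1+4b²)), a = (σ_b/√2)(a₂−a₁), and assume a ≤ √(2/π). Let x(t) = √γ e^{2iπt(a₁+bt)} + √γ e^{2iπt(a₂+bt)}. For N ∈ ℤ, let C_N ⊂ ℂ be the set of z = τ+iω such that (r,s) ∈ [0,a] × [N/a, (N+1)/a], where r = (σ_b/√2)(ω − 2bτ − a₁) and s = (σ_b/√2)(τ + 2bω − (a₁+a₂)b). Then for every z on the boundary of C_N, Spec(x)(z) ≥ γ σ_b (1 − e^{−πa²})². -/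
open Real MeasureTheory

/-- The complex exponent identity. -/
lemma exponent_eq (b τ ω A K : ℝ) (hK : K = 1 + 4*b^2) :
    (-(π:ℂ)*(τ:ℂ)^2) - (2*(π:ℂ)*(Complex.I*(A:ℂ) + (τ:ℂ) - Complex.I*(ω:ℂ)))^2
        / (4*((π:ℂ)*(2*Complex.I*(b:ℂ)-1)))
    = ((-π*(2*b*τ+A-ω)^2/K : ℝ) : ℂ)
      + ((π*(2*τ*(A-ω)+2*b*(τ^2-(A-ω)^2))/K : ℝ) : ℂ)*Complex.I := by
  have hK0 : ((K:ℂ)) ≠ 0 := by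
    simp only [ne_eq, Complex.ofReal_eq_zero]; rw [hK]; positivity
  have h1 : ((π:ℂ)*(2*Complex.I*(b:ℂ)-1)) ≠ 0 := by
    intro h
    have := congrArg Complex.re h
    simp [Complex.mul_re] at this
  have h2 : (2*Complex.I*(b:ℂ)-1) ≠ 0 := by
    intro h
    have := congrArg Complex.re h
    simp at this
  push_cast
  rw [hK] at hK0 ⊢
  push_cast at hK0 ⊢
  field_simp
  ring_nf
  simp only [Complex.I_sq]
  ring_nf

/-- half of the key real inequality -/
lemma key_ineq_half (a r : ℝ) (ha : 0 < a) (h2 : π * a ^ 2 ≤ 2)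
    (hr0 : 0 ≤ r) (hra : r ≤ a / 2) :
    1 ≤ Real.exp (-(π * r ^ 2)) + Real.exp (-(π * (r - a) ^ 2)) := by
  rcases eq_or_lt_of_le hr0 with h | h
  · rw [← h]
    have h0 : -(π * (0:ℝ) ^ 2) = 0 := by norm_num
    rw [h0, Real.exp_zero]
    linarith [Real.exp_pos (-(π * ((0:ℝ) - a) ^ 2))]
  · set x := Real.sqrt π * r with hx
    have hπ : (0:ℝ) < π := Real.pi_pos
    have hsp : Real.sqrt π ^ 2 = π := Real.sq_sqrt hπ.le
    have hs2 : Real.sqrt 2 ^ 2 = 2 := Real.sq_sqrt (by norm_num)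
    have hx0 : 0 < x := by positivity
    have hxsq : x ^ 2 = π * r ^ 2 := by rw [hx, mul_pow, hsp]
    have hπ2 : (0:ℝ) < π := hπ
    have hr2 : r ^ 2 ≤ a ^ 2 / 4 := by nlinarith
    have hxhalf : x ^ 2 ≤ 1 / 2 := by
      have := mul_le_mul_of_nonneg_left hr2 hπ.le
      rw [hxsq]; linarith
    have hsa : Real.sqrt π * a ≤ Real.sqrt 2 := by
      nlinarith [Real.sqrt_nonneg π, Real.sqrt_nonneg 2, sq_nonneg (Real.sqrt π * a - Real.sqrt 2)]
    have h2x : 2 * x ≤ Real.sqrt π * a := by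
      rw [hx]; nlinarith [Real.sqrt_nonneg π]
    -- Claim A : π (r-a)² ≤ (√2 - x)²
    have hA : π * (r - a) ^ 2 ≤ (Real.sqrt 2 - x) ^ 2 := by nlinarith
    -- Claim B : log (x²) ≤ -(√2 - x)²
    have hlog2 : (0.6931471803 : ℝ) < Real.log 2 := Real.log_two_gt_d9
    have hB : Real.log (x ^ 2) ≤ -(Real.sqrt 2 - x) ^ 2 := by
      have h1 : Real.log (Real.sqrt 2 * x) ≤ Real.sqrt 2 * x - 1 :=
        Real.log_le_sub_one_of_pos (by positivity)
      rw [Real.log_mul (by positivity) (by positivity), Real.log_sqrt (by norm_num)] at h1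
      rw [Real.log_pow]
      push_cast
      nlinarith
    have hpe : x ^ 2 ≤ Real.exp (-(π * (r - a) ^ 2)) := by
      calc x ^ 2 = Real.exp (Real.log (x ^ 2)) := (Real.exp_log (by positivity)).symm
      _ ≤ Real.exp (-(π * (r - a) ^ 2)) := Real.exp_le_exp.mpr (by linarith)
    have h1p : 1 - π * r ^ 2 ≤ Real.exp (-(π * r ^ 2)) := by
      have := Real.add_one_le_exp (-(π * r ^ 2)); linarith
    nlinarith

lemma key_ineq (a r : ℝ) (ha : 0 < a) (h2 : π * a ^ 2 ≤ 2)
    (hr0 : 0 ≤ r) (hra : r ≤ a) :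
    1 ≤ Real.exp (-(π * r ^ 2)) + Real.exp (-(π * (r - a) ^ 2)) := by
  rcases le_or_gt r (a / 2) with h | h
  · exact key_ineq_half a r ha h2 hr0 h
  · have := key_ineq_half a (a - r) ha h2 (by linarith) (by linarith)
    rw [show -(π * ((a - r) - a) ^ 2) = -(π * r ^ 2) by ring,
      show -(π * (a - r) ^ 2) = -(π * (r - a) ^ 2) by ring] at this
    linarith

/-- The spectrogram closed form. -/
lemma spec_formula (a₁ a₂ b γ : ℝ) (hγ : 0 ≤ γ)
    (σ a : ℝ) (hσ : σ = Real.sqrt (2 / (1 + 4 * b ^ 2)))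
    (ha : a = σ / Real.sqrt 2 * (a₂ - a₁))
    (x : ℝ → ℂ)
    (hx : ∀ t : ℝ, x t =
      (Real.sqrt γ : ℂ) * Complex.exp (2 * (π : ℂ) * Complex.I * (t : ℂ)
        * ((a₁ : ℂ) + (b : ℂ) * (t : ℂ)))
      + (Real.sqrt γ : ℂ) * Complex.exp (2 * (π : ℂ) * Complex.I * (t : ℂ)
        * ((a₂ : ℂ) + (b : ℂ) * (t : ℂ))))
    (r s : ℂ → ℝ)
    (hr : ∀ z : ℂ, r z = σ / Real.sqrt 2 * (z.im - 2 * b * z.re - a₁))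
    (hs : ∀ z : ℂ, s z = σ / Real.sqrt 2 * (z.re + 2 * b * z.im - (a₁ + a₂) * b))
    (z : ℂ) :
    Spec x z = γ * σ * (Real.exp (-(π * (r z) ^ 2)) ^ 2 + Real.exp (-(π * (r z - a) ^ 2)) ^ 2
      + 2 * (Real.exp (-(π * (r z) ^ 2)) * Real.exp (-(π * (r z - a) ^ 2))
          * Real.cos (2 * π * (a * s z)))) := by
  have hπ : (0:ℝ) < π := Real.pi_pos
  simp only [Spec]
  set τ := z.re with hτ
  set ω := z.im with hω
  set K : ℝ := 1 + 4 * b ^ 2 with hK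
  have hK0 : (0:ℝ) < K := by rw [hK]; positivity
  set B : ℂ := (π:ℂ) * (2 * Complex.I * (b:ℂ) - 1) with hB
  have hBre : B.re < 0 := by
    rw [hB]
    simp [Complex.mul_re]
    positivity
  have hEq : ∀ A : ℝ,
      (-(π:ℂ) * (τ:ℂ)^2) - (2*(π:ℂ)*(Complex.I*(A:ℂ) + (τ:ℂ) - Complex.I*(ω:ℂ)))^2 / (4*B)
      = ((-π*(2*b*τ+A-ω)^2/K : ℝ) : ℂ)
        + ((π*(2*τ*(A-ω)+2*b*(τ^2-(A-ω)^2))/K : ℝ) : ℂ)*Complex.I := by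
    intro A
    rw [hB]
    exact exponent_eq b τ ω A K hK
  have e : ∀ (A t : ℝ),
      Complex.exp (2 * (π:ℂ) * Complex.I * (t:ℂ) * ((A:ℂ) + (b:ℂ) * (t:ℂ)))
      * Complex.exp (-(π:ℂ) * ((t:ℂ) - (τ:ℂ))^2)
      * Complex.exp (-2 * (π:ℂ) * Complex.I * (ω:ℂ) * (t:ℂ))
      = Complex.exp (B * (t:ℂ)^2 + (2*(π:ℂ)*(Complex.I*(A:ℂ) + (τ:ℂ) - Complex.I*(ω:ℂ))) * (t:ℂ)
          + (-(π:ℂ) * (τ:ℂ)^2)) := by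
    intro A t
    rw [← Complex.exp_add, ← Complex.exp_add]
    congr 1
    rw [hB]
    ring
  have hint : ∀ t : ℝ, x t * (((2:ℝ) ^ ((1:ℝ)/4) : ℝ):ℂ)
      * Complex.exp (-(π:ℂ) * ((t:ℂ) - (τ:ℂ))^2)
      * Complex.exp (-2 * (π:ℂ) * Complex.I * (ω:ℂ) * (t:ℂ))
      = ((Real.sqrt γ : ℝ):ℂ) * (((2:ℝ) ^ ((1:ℝ)/4) : ℝ):ℂ)
        * (Complex.exp (B * (t:ℂ)^2 + (2*(π:ℂ)*(Complex.I*(a₁:ℂ) + (τ:ℂ) - Complex.I*(ω:ℂ))) * (t:ℂ)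
            + (-(π:ℂ) * (τ:ℂ)^2))
          + Complex.exp (B * (t:ℂ)^2 + (2*(π:ℂ)*(Complex.I*(a₂:ℂ) + (τ:ℂ) - Complex.I*(ω:ℂ))) * (t:ℂ)
            + (-(π:ℂ) * (τ:ℂ)^2))) := by
    intro t
    rw [hx t, ← e a₁ t, ← e a₂ t]
    ring
  simp only [hint]
  rw [MeasureTheory.integral_const_mul]
  rw [MeasureTheory.integral_add (integrable_cexp_quadratic' hBre _ _)
    (integrable_cexp_quadratic' hBre _ _)]
  rw [integral_cexp_quadratic hBre, integral_cexp_quadratic hBre]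
  rw [hEq a₁, hEq a₂, ← mul_add]
  rw [norm_mul, norm_mul, norm_mul, mul_pow, mul_pow, mul_pow]
  have habs1 : ‖((Real.sqrt γ : ℝ):ℂ)‖ ^ 2 = γ := by
    rw [Complex.norm_real, Real.norm_of_nonneg (Real.sqrt_nonneg γ), Real.sq_sqrt hγ]
  have habs2 : ‖(((2:ℝ) ^ ((1:ℝ)/4) : ℝ):ℂ)‖ ^ 2 = Real.sqrt 2 := by
    rw [Complex.norm_real, Real.norm_of_nonneg (by positivity),
      ← Real.rpow_natCast ((2:ℝ) ^ ((1:ℝ)/4)) 2, ← Real.rpow_mul (by norm_num)]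
    rw [Real.sqrt_eq_rpow]
    norm_num
  have habsB : ‖(π:ℂ)/(-B)‖ = 1 / Real.sqrt K := by
    rw [norm_div]
    have h1 : ‖(π:ℂ)‖ = π := by
      rw [Complex.norm_real, Real.norm_of_nonneg hπ.le]
    have h2 : ‖-B‖ = π * Real.sqrt K := by
      rw [Complex.norm_def]
      have hns : Complex.normSq (-B) = π^2 * K := by
        rw [hB, hK]
        simp [Complex.normSq_apply, Complex.mul_re, Complex.mul_im]
        ring
      rw [hns, Real.sqrt_mul (sq_nonneg π), Real.sqrt_sq hπ.le]
    rw [h1, h2]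
    rw [div_mul_eq_div_div, div_self hπ.ne']
  have habsg : ‖((π:ℂ)/(-B)) ^ (1/2 : ℂ)‖ ^ 2 = 1 / Real.sqrt K := by
    rw [show (1/2 : ℂ) = ((1/2 : ℝ):ℂ) by norm_num, Complex.norm_cpow_real, habsB,
      ← Real.sqrt_eq_rpow, Real.sq_sqrt (by positivity)]
  rw [habs1, habs2, habsg]
  rw [Complex.sq_norm, Complex.normSq_add]
  have hns : ∀ X Y : ℝ, Complex.normSq (Complex.exp ((X:ℂ) + (Y:ℂ)*Complex.I))
      = Real.exp X ^ 2 := by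
    intro X Y
    rw [← Complex.sq_norm, Complex.norm_exp]
    congr 2
    simp
  have hre : ∀ X₁ Y₁ X₂ Y₂ : ℝ,
      (Complex.exp ((X₁:ℂ) + (Y₁:ℂ)*Complex.I)
        * (starRingEnd ℂ) (Complex.exp ((X₂:ℂ) + (Y₂:ℂ)*Complex.I))).re
      = (Real.exp X₁ * Real.exp X₂) * Real.cos (Y₁ - Y₂) := by
    intro X₁ Y₁ X₂ Y₂
    rw [← Complex.exp_conj, ← Complex.exp_add, Complex.exp_re, ← Real.exp_add]
    have h1 : (((X₁:ℂ) + (Y₁:ℂ)*Complex.I) + (starRingEnd ℂ) ((X₂:ℂ) + (Y₂:ℂ)*Complex.I)).re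
        = X₁ + X₂ := by simp
    have h2 : (((X₁:ℂ) + (Y₁:ℂ)*Complex.I) + (starRingEnd ℂ) ((X₂:ℂ) + (Y₂:ℂ)*Complex.I)).im
        = Y₁ - Y₂ := by simp [sub_eq_add_neg]
    rw [h1, h2]
  rw [hns, hns, hre]
  -- now a purely real identity
  have h2' : (Real.sqrt 2 : ℝ)^2 = 2 := Real.sq_sqrt (by norm_num)
  have hσ' : σ = Real.sqrt 2 / Real.sqrt K := by
    rw [hσ]
    exact Real.sqrt_div (by norm_num) K
  have hσ2 : σ^2 = 2/K := by
    rw [hσ, Real.sq_sqrt (by positivity)]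
  have hsig : (σ / Real.sqrt 2)^2 = 1/K := by
    rw [div_pow, h2', hσ2]
    ring
  have L1 : -π*(2*b*τ+a₁-ω)^2/K = -(π * (r z)^2) := by
    rw [hr z, ← hτ, ← hω]
    linear_combination (π*(ω-2*b*τ-a₁)^2) * hsig
  have L2 : -π*(2*b*τ+a₂-ω)^2/K = -(π * (r z - a)^2) := by
    rw [hr z, ha, ← hτ, ← hω]
    linear_combination (π*(ω-2*b*τ-a₂)^2) * hsig
  have L3 : π*(2*τ*(a₁-ω)+2*b*(τ^2-(a₁-ω)^2))/K - π*(2*τ*(a₂-ω)+2*b*(τ^2-(a₂-ω)^2))/K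
      = -(2 * π * (a * s z)) := by
    rw [hs z, ha, ← hτ, ← hω]
    linear_combination (2*π*(a₂-a₁)*(τ+2*b*ω-(a₁+a₂)*b)) * hsig
  rw [L1, L2, L3, Real.cos_neg]
  rw [hσ']
  have hsK : Real.sqrt K ≠ 0 := by positivity
  field_simp

/-- If the two equal-amplitude parallel chirps are close enough (`a ≤ √(2/π)`), then on
the boundary of the rectangle `C_N = {(r,s) ∈ [0,a] × [N/a,(N+1)/a]}` the spectrogram of
the pair of chirps is at least `γ σ_b (1 − e^{−πa²})²`. -/
theorem spec_lower_bound_on_boundary (a₁ a₂ b γ : ℝ) (hlt : a₁ < a₂) (hγ : 0 < γ)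
    (σ a : ℝ) (hσ : σ = Real.sqrt (2 / (1 + 4 * b ^ 2)))
    (ha : a = σ / Real.sqrt 2 * (a₂ - a₁))
    (hclose : a ≤ Real.sqrt (2 / π))
    (x : ℝ → ℂ)
    (hx : ∀ t : ℝ, x t =
      (Real.sqrt γ : ℂ) * Complex.exp (2 * (π : ℂ) * Complex.I * (t : ℂ)
        * ((a₁ : ℂ) + (b : ℂ) * (t : ℂ)))
      + (Real.sqrt γ : ℂ) * Complex.exp (2 * (π : ℂ) * Complex.I * (t : ℂ)
        * ((a₂ : ℂ) + (b : ℂ) * (t : ℂ))))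
    (r s : ℂ → ℝ)
    (hr : ∀ z : ℂ, r z = σ / Real.sqrt 2 * (z.im - 2 * b * z.re - a₁))
    (hs : ∀ z : ℂ, s z = σ / Real.sqrt 2 * (z.re + 2 * b * z.im - (a₁ + a₂) * b))
    (N : ℤ)
    (C : Set ℂ)
    (hC : C = {z : ℂ | r z ∈ Set.Icc 0 a ∧ s z ∈ Set.Icc ((N : ℝ) / a) (((N : ℝ) + 1) / a)}) :
    ∀ z ∈ frontier C, γ * σ * (1 - Real.exp (-π * a ^ 2)) ^ 2 ≤ Spec x z := by
  intro z hz
  have hπ : (0:ℝ) < π := Real.pi_pos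
  have hσ0 : 0 < σ := by rw [hσ]; positivity
  have ha0 : 0 < a := by
    have h12 : 0 < a₂ - a₁ := by linarith
    rw [ha]; positivity
  have hπa2 : π * a ^ 2 ≤ 2 := by
    have h1 : a ^ 2 ≤ 2 / π := by
      have := Real.sqrt_nonneg (2 / π)
      nlinarith [Real.sq_sqrt (show (0:ℝ) ≤ 2 / π by positivity)]
    calc π * a ^ 2 ≤ π * (2 / π) := by nlinarith
    _ = 2 := by field_simp
  -- continuity
  have hrc : Continuous r := by
    have : r = fun w : ℂ => σ / Real.sqrt 2 * (w.im - 2 * b * w.re - a₁) := funext hr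
    rw [this]; fun_prop
  have hsc : Continuous s := by
    have : s = fun w : ℂ => σ / Real.sqrt 2 * (w.re + 2 * b * w.im - (a₁ + a₂) * b) := funext hs
    rw [this]; fun_prop
  have hCclosed : IsClosed C := by
    rw [hC]
    exact (isClosed_Icc.preimage hrc).inter (isClosed_Icc.preimage hsc)
  have hzC : z ∈ C := hCclosed.frontier_subset hz
  rw [frontier_eq_closure_inter_closure, closure_compl] at hz
  have hzNI : z ∉ interior C := hz.2
  have hU : {w : ℂ | r w ∈ Set.Ioo 0 a ∧ s w ∈ Set.Ioo ((N : ℝ) / a) (((N : ℝ) + 1) / a)}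
      ⊆ interior C := by
    apply interior_maximal
    · rw [hC]
      intro w hw
      exact ⟨Set.Ioo_subset_Icc_self hw.1, Set.Ioo_subset_Icc_self hw.2⟩
    · exact (isOpen_Ioo.preimage hrc).inter (isOpen_Ioo.preimage hsc)
  rw [hC] at hzC
  obtain ⟨hrz, hsz⟩ := hzC
  have hcases : r z = 0 ∨ r z = a ∨ s z = (N : ℝ) / a ∨ s z = ((N : ℝ) + 1) / a := by
    by_contra hcon
    push_neg at hcon
    obtain ⟨h1, h2, h3, h4⟩ := hcon
    exact hzNI (hU ⟨⟨lt_of_le_of_ne hrz.1 (Ne.symm h1), lt_of_le_of_ne hrz.2 h2⟩,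
      ⟨lt_of_le_of_ne hsz.1 (Ne.symm h3), lt_of_le_of_ne hsz.2 h4⟩⟩)
  rw [spec_formula a₁ a₂ b γ hγ.le σ a hσ ha x hx r s hr hs z]
  set u := Real.exp (-(π * (r z) ^ 2)) with hu
  set v := Real.exp (-(π * (r z - a) ^ 2)) with hv
  have hu0 : 0 < u := Real.exp_pos _
  have hv0 : 0 < v := Real.exp_pos _
  have hE : Real.exp (-π * a ^ 2) < 1 := by
    calc Real.exp (-π * a ^ 2) < Real.exp 0 := Real.exp_lt_exp.mpr (by nlinarith [pow_pos ha0 2])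
    _ = 1 := Real.exp_zero
  have hE0 : 0 < Real.exp (-π * a ^ 2) := Real.exp_pos _
  have hγσ : (0:ℝ) ≤ γ * σ := by positivity
  rcases hcases with h | h | h | h
  · -- r z = 0 : u = 1, v = E
    have hu1 : u = 1 := by rw [hu, h]; norm_num
    have hvE : v = Real.exp (-π * a ^ 2) := by rw [hv, h]; ring_nf
    rw [hu1, hvE]
    have hcos := Real.neg_one_le_cos (2 * π * (a * s z))
    set E := Real.exp (-π * a ^ 2)
    have : (1 - E) ^ 2 ≤ 1 ^ 2 + E ^ 2 + 2 * (1 * E * Real.cos (2 * π * (a * s z))) := by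
      nlinarith
    exact mul_le_mul_of_nonneg_left this hγσ
  · -- r z = a : u = E, v = 1
    have huE : u = Real.exp (-π * a ^ 2) := by rw [hu, h]; ring_nf
    have hv1 : v = 1 := by rw [hv, h]; norm_num
    rw [huE, hv1]
    have hcos := Real.neg_one_le_cos (2 * π * (a * s z))
    set E := Real.exp (-π * a ^ 2)
    have : (1 - E) ^ 2 ≤ E ^ 2 + 1 ^ 2 + 2 * (E * 1 * Real.cos (2 * π * (a * s z))) := by
      nlinarith
    exact mul_le_mul_of_nonneg_left this hγσ
  · -- s z = N / a
    have hcos : Real.cos (2 * π * (a * s z)) = 1 := by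
      rw [h, show 2 * π * (a * ((N:ℝ) / a)) = (N:ℝ) * (2 * π) by field_simp]
      exact Real.cos_int_mul_two_pi N
    rw [hcos]
    have hkey : 1 ≤ u + v := key_ineq a (r z) ha0 hπa2 hrz.1 hrz.2
    have : (1 - Real.exp (-π * a ^ 2)) ^ 2 ≤ u ^ 2 + v ^ 2 + 2 * (u * v * 1) := by
      nlinarith
    exact mul_le_mul_of_nonneg_left this hγσ
  · -- s z = (N+1) / a
    have hcos : Real.cos (2 * π * (a * s z)) = 1 := by
      rw [h, show 2 * π * (a * (((N:ℝ) + 1) / a)) = ((N + 1 : ℤ):ℝ) * (2 * π) by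
        push_cast; field_simp]
      exact Real.cos_int_mul_two_pi (N + 1)
    rw [hcos]
    have hkey : 1 ≤ u + v := key_ineq a (r z) ha0 hπa2 hrz.1 hrz.2
    have : (1 - Real.exp (-π * a ^ 2)) ^ 2 ≤ u ^ 2 + v ^ 2 + 2 * (u * v * 1) := by
      nlinarith
    exact mul_le_mul_of_nonneg_left this hγσ
end
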